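/- Let (Ω, F, μ) be a standard Borel probability space, and let W₁, W₂, Z₁, Z₂ be real-valued integrable random variables on Ω. Assume Z₁ and Z₂ are independent, and W₁ is measurable with respect to a sub-σ-algebra G ⊆ F. Let ω ↦ Law(W₂ | G)(ω) denote a regular conditional distribution of W₂ given G (for instance, the pushforward under W₂ of the conditional expectation kernel of μ given G). Then d_W(Law(W₁+W₂), Law(Z₁+Z₂)) ≤ d_W(Law(W₁), Law(Z₁)) + E[ d_W( Law(W₂ | G), Law(Z₂) ) ], where the expectation is over ω ∈ Ω. -/

import Mathlib

open MeasureTheory ProbabilityTheory Set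
open scoped ENNReal

noncomputable def dW (p q : Measure ℝ) : ℝ :=
  ∫ t : ℝ, |(p (Set.Ioi t)).toReal - (q (Set.Ioi t)).toReal|

namespace DWAux

noncomputable def tailR (p : Measure ℝ) (t : ℝ) : ℝ := (p (Set.Ioi t)).toReal

lemma antitone_tailE (p : Measure ℝ) : Antitone (fun s : ℝ => p (Set.Ioi s)) :=
  fun _ _ h => measure_mono (Set.Ioi_subset_Ioi h)

lemma measurable_tailE (p : Measure ℝ) : Measurable (fun s : ℝ => p (Set.Ioi s)) :=
  (antitone_tailE p).measurable

lemma antitone_tailR (p : Measure ℝ) [IsFiniteMeasure p] : Antitone (tailR p) :=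
  fun _ _ h => ENNReal.toReal_mono (measure_ne_top p _) (measure_mono (Set.Ioi_subset_Ioi h))

lemma measurable_tailR (p : Measure ℝ) [IsFiniteMeasure p] : Measurable (tailR p) :=
  (antitone_tailR p).measurable

lemma tailR_nonneg (p : Measure ℝ) (t : ℝ) : 0 ≤ tailR p t := ENNReal.toReal_nonneg

lemma tailR_le_one (p : Measure ℝ) [IsProbabilityMeasure p] (t : ℝ) : tailR p t ≤ 1 := by
  have h : p (Set.Ioi t) ≤ 1 := prob_le_one
  simpa [tailR] using ENNReal.toReal_mono ENNReal.one_ne_top h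

noncomputable def eW (p q : Measure ℝ) : ℝ≥0∞ :=
  ∫⁻ t : ℝ, ENNReal.ofReal |tailR p t - tailR q t|

lemma dW_eq_toReal_eW (p q : Measure ℝ) [IsFiniteMeasure p] [IsFiniteMeasure q] :
    dW p q = (eW p q).toReal := by
  rw [dW, eW]
  exact integral_eq_lintegral_of_nonneg_ae (Filter.Eventually.of_forall fun t => abs_nonneg _)
    (((measurable_tailR p).sub (measurable_tailR q)).abs).aestronglyMeasurable

lemma lintegral_tail_bound (r : Measure ℝ) [IsProbabilityMeasure r] :
    (∫⁻ t in Set.Ici (0:ℝ), r (Set.Ioi t)) + ∫⁻ t in Set.Iio (0:ℝ), r (Set.Iic t)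
      ≤ ∫⁻ x : ℝ, ENNReal.ofReal |x| ∂r := by
  have h1 : ∫⁻ t in Set.Ici (0:ℝ), r (Set.Ioi t)
      = ∫⁻ x : ℝ, ENNReal.ofReal (max x 0) ∂r := by
    rw [lintegral_eq_lintegral_meas_lt r (Filter.Eventually.of_forall fun x => le_max_right x 0)
      (measurable_id.max measurable_const).aemeasurable,
      setLIntegral_congr (MeasureTheory.Ioi_ae_eq_Ici (a := (0:ℝ))).symm]
    refine (setLIntegral_congr_fun measurableSet_Ioi
      (fun t ht => ?_)).symm
    congr 1
    ext a
    simp only [Set.mem_setOf_eq, lt_max_iff, Set.mem_Ioi]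
    exact or_iff_left (not_lt.mpr (le_of_lt ht))
  have h2 : ∫⁻ t in Set.Iio (0:ℝ), r (Set.Iic t)
      = ∫⁻ x : ℝ, ENNReal.ofReal (max (-x) 0) ∂r := by
    have hm : Measurable fun t : ℝ => r (Set.Iic t) :=
      Monotone.measurable (fun _ _ h => measure_mono (Set.Iic_subset_Iic.mpr h))
    have hneg : ∫⁻ t in Set.Iio (0:ℝ), r (Set.Iic t)
        = ∫⁻ t in Set.Ioi (0:ℝ), r (Set.Iic (-t)) := by
      rw [← lintegral_indicator measurableSet_Iio, ← lintegral_indicator measurableSet_Ioi,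
        ← (Measure.measurePreserving_neg (volume : Measure ℝ)).lintegral_comp
          ((hm.indicator measurableSet_Iio))]
      refine lintegral_congr fun t => ?_
      simp only [Set.indicator_apply, Set.mem_Iio, Set.mem_Ioi, neg_lt_zero]
    rw [hneg, lintegral_eq_lintegral_meas_le r
      (Filter.Eventually.of_forall fun x => le_max_right (-x) 0)
      (measurable_id.neg.max measurable_const).aemeasurable]
    refine setLIntegral_congr_fun measurableSet_Ioi
      (fun t ht => ?_)
    congr 1
    ext a
    simp only [Set.mem_Iic, Set.mem_setOf_eq, le_max_iff]
    constructor
    · intro h; left; linarith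
    · rintro (h | h)
      · linarith
      · exact absurd h (not_le.mpr ht)
  have hadd := lintegral_add_left (μ := r)
    (f := fun x : ℝ => ENNReal.ofReal (max x 0))
    ((measurable_id.max measurable_const).ennreal_ofReal)
    (fun x : ℝ => ENNReal.ofReal (max (-x) 0))
  rw [h1, h2, ← hadd]
  refine lintegral_mono fun x => ?_
  rw [← ENNReal.ofReal_add (le_max_right _ _) (le_max_right _ _)]
  refine ENNReal.ofReal_le_ofReal (le_of_eq ?_)
  rcases le_total 0 x with h | h
  · rw [max_eq_left h, max_eq_right (neg_nonpos.mpr h), add_zero, abs_of_nonneg h]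
  · rw [max_eq_right h, max_eq_left (neg_nonneg.mpr h), zero_add, abs_of_nonpos h]

lemma eW_le (p q : Measure ℝ) [IsProbabilityMeasure p] [IsProbabilityMeasure q] :
    eW p q ≤ (∫⁻ x : ℝ, ENNReal.ofReal |x| ∂p) + ∫⁻ x : ℝ, ENNReal.ofReal |x| ∂q := by
  have tail_eq : ∀ (r : Measure ℝ) [IsProbabilityMeasure r], ∀ t : ℝ,
      tailR r t = 1 - (r (Set.Iic t)).toReal := by
    intro r _ t
    have h := measure_add_measure_compl (μ := r) (measurableSet_Iic (a := t))
    rw [compl_Iic, measure_univ] at h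
    have h' : (r (Set.Iic t)).toReal + (r (Set.Ioi t)).toReal = 1 := by
      rw [← ENNReal.toReal_add (measure_ne_top r _) (measure_ne_top r _), h, ENNReal.toReal_one]
    simp only [tailR]; linarith
  have hb : ∀ t : ℝ, ENNReal.ofReal |tailR p t - tailR q t| ≤
      (Set.Ici (0:ℝ)).indicator (fun t => p (Set.Ioi t) + q (Set.Ioi t)) t
      + (Set.Iio (0:ℝ)).indicator (fun t => p (Set.Iic t) + q (Set.Iic t)) t := by
    intro t
    rcases le_or_gt 0 t with h | h
    · rw [Set.indicator_of_mem (Set.mem_Ici.mpr h),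
        Set.indicator_of_notMem (by simpa using h), add_zero]
      calc ENNReal.ofReal |tailR p t - tailR q t|
          ≤ ENNReal.ofReal (tailR p t + tailR q t) := by
            refine ENNReal.ofReal_le_ofReal ((abs_sub _ _).trans (le_of_eq ?_))
            rw [abs_of_nonneg (tailR_nonneg p t), abs_of_nonneg (tailR_nonneg q t)]
        _ = p (Set.Ioi t) + q (Set.Ioi t) := by
            rw [ENNReal.ofReal_add (tailR_nonneg p t) (tailR_nonneg q t), tailR, tailR,
              ENNReal.ofReal_toReal (measure_ne_top p _),
              ENNReal.ofReal_toReal (measure_ne_top q _)]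
    · rw [Set.indicator_of_notMem (by simpa using not_le.mpr h),
        Set.indicator_of_mem (Set.mem_Iio.mpr h), zero_add]
      have hpt := tail_eq p t
      have hqt := tail_eq q t
      have habs : |tailR p t - tailR q t|
          = |(q (Set.Iic t)).toReal - (p (Set.Iic t)).toReal| := by
        rw [hpt, hqt]; ring_nf
      calc ENNReal.ofReal |tailR p t - tailR q t|
          ≤ ENNReal.ofReal ((p (Set.Iic t)).toReal + (q (Set.Iic t)).toReal) := by
            rw [habs]
            refine ENNReal.ofReal_le_ofReal ((abs_sub _ _).trans (le_of_eq ?_))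
            rw [abs_of_nonneg ENNReal.toReal_nonneg, abs_of_nonneg ENNReal.toReal_nonneg]
            ring
        _ = p (Set.Iic t) + q (Set.Iic t) := by
            rw [ENNReal.ofReal_add ENNReal.toReal_nonneg ENNReal.toReal_nonneg,
              ENNReal.ofReal_toReal (measure_ne_top p _),
              ENNReal.ofReal_toReal (measure_ne_top q _)]
  have hmIic : ∀ (r : Measure ℝ), Measurable fun t : ℝ => r (Set.Iic t) := fun r =>
    Monotone.measurable (fun _ _ h => measure_mono (Set.Iic_subset_Iic.mpr h))
  have step1 : eW p q ≤ ∫⁻ t : ℝ,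
      ((Set.Ici (0:ℝ)).indicator (fun t => p (Set.Ioi t) + q (Set.Ioi t)) t
        + (Set.Iio (0:ℝ)).indicator (fun t => p (Set.Iic t) + q (Set.Iic t)) t) :=
    lintegral_mono hb
  have step2 : (∫⁻ t : ℝ,
      ((Set.Ici (0:ℝ)).indicator (fun t => p (Set.Ioi t) + q (Set.Ioi t)) t
        + (Set.Iio (0:ℝ)).indicator (fun t => p (Set.Iic t) + q (Set.Iic t)) t))
      = (∫⁻ t in Set.Ici (0:ℝ), (p (Set.Ioi t) + q (Set.Ioi t)))
        + ∫⁻ t in Set.Iio (0:ℝ), (p (Set.Iic t) + q (Set.Iic t)) := by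
    rw [lintegral_add_left (f := (Set.Ici (0:ℝ)).indicator (fun t => p (Set.Ioi t) + q (Set.Ioi t))) (((measurable_tailE p).add (measurable_tailE q)).indicator
      measurableSet_Ici), lintegral_indicator measurableSet_Ici,
      lintegral_indicator measurableSet_Iio]
  have step3 : (∫⁻ t in Set.Ici (0:ℝ), (p (Set.Ioi t) + q (Set.Ioi t)))
        + ∫⁻ t in Set.Iio (0:ℝ), (p (Set.Iic t) + q (Set.Iic t))
      = ((∫⁻ t in Set.Ici (0:ℝ), p (Set.Ioi t)) + ∫⁻ t in Set.Iio (0:ℝ), p (Set.Iic t))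
        + ((∫⁻ t in Set.Ici (0:ℝ), q (Set.Ioi t)) + ∫⁻ t in Set.Iio (0:ℝ), q (Set.Iic t)) := by
    rw [lintegral_add_left (measurable_tailE p), lintegral_add_left (hmIic p)]
    ring
  refine step1.trans (le_of_eq (step2.trans step3) |>.trans ?_)
  exact add_le_add (lintegral_tail_bound p) (lintegral_tail_bound q)

lemma lintegral_ofReal_lt_top_of_integrable {α : Type*} [MeasurableSpace α] {μ : Measure α}
    {g : α → ℝ} (hg : Integrable g μ) : ∫⁻ a, ENNReal.ofReal (g a) ∂μ < ⊤ := by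
  refine lt_of_le_of_lt (lintegral_mono fun a => ?_) hg.hasFiniteIntegral
  exact Real.ofReal_le_enorm _

lemma moment_map_lt_top {α : Type*} [MeasurableSpace α] {μ : Measure α} {X : α → ℝ}
    (hXm : Measurable X) (hX : Integrable X μ) :
    ∫⁻ x : ℝ, ENNReal.ofReal |x| ∂(Measure.map X μ) < ⊤ := by
  rw [lintegral_map (f := fun x : ℝ => ENNReal.ofReal |x|)
    (continuous_abs.measurable.ennreal_ofReal) hXm]
  exact lintegral_ofReal_lt_top_of_integrable hX.abs

lemma prod_tail (ρ ν : Measure ℝ) [IsProbabilityMeasure ρ] [IsProbabilityMeasure ν] (t : ℝ) :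
    (ρ.prod ν) {p : ℝ × ℝ | t < p.1 + p.2} = ∫⁻ y, ρ (Set.Ioi (t - y)) ∂ν := by
  have hs : MeasurableSet {p : ℝ × ℝ | t < p.1 + p.2} :=
    measurableSet_lt measurable_const (measurable_fst.add measurable_snd)
  rw [← Measure.prod_swap, Measure.map_apply measurable_swap hs, Measure.prod_apply
    (measurable_swap hs)]
  refine lintegral_congr fun y => ?_
  congr 1
  ext x
  simp only [Set.mem_preimage, Prod.swap_prod_mk, Set.mem_setOf_eq, Set.mem_Ioi]
  exact (sub_lt_iff_lt_add).symm

lemma toReal_lintegral_tail (ρ ν : Measure ℝ) [IsProbabilityMeasure ρ] [IsProbabilityMeasure ν]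
    (t : ℝ) :
    ((ρ.prod ν) {p : ℝ × ℝ | t < p.1 + p.2}).toReal = ∫ y, tailR ρ (t - y) ∂ν := by
  have hm : Measurable fun y : ℝ => ρ (Set.Ioi (t - y)) :=
    (measurable_tailE ρ).comp (measurable_const.sub measurable_id)
  rw [prod_tail, ← integral_toReal hm.aemeasurable
    (Filter.Eventually.of_forall fun y => measure_lt_top ρ _)]
  rfl

lemma toReal_prod_left (ρ ν : Measure ℝ) [IsProbabilityMeasure ρ] [IsProbabilityMeasure ν]
    (t : ℝ) :
    ((ρ.prod ν) {p : ℝ × ℝ | t < p.1 + p.2}).toReal = ∫ x, tailR ν (t - x) ∂ρ := by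
  have hs : MeasurableSet {p : ℝ × ℝ | t < p.1 + p.2} :=
    measurableSet_lt measurable_const (measurable_fst.add measurable_snd)
  rw [Measure.prod_apply hs]
  have heq : ∀ x : ℝ, (Prod.mk x ⁻¹' {p : ℝ × ℝ | t < p.1 + p.2}) = Set.Ioi (t - x) := by
    intro x; ext y
    simp only [Set.mem_preimage, Set.mem_setOf_eq, Set.mem_Ioi]
    exact (sub_lt_iff_lt_add').symm
  simp_rw [heq]
  have hm : Measurable fun x : ℝ => ν (Set.Ioi (t - x)) :=
    (measurable_tailE ν).comp (measurable_const.sub measurable_id)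
  rw [← integral_toReal hm.aemeasurable
    (Filter.Eventually.of_forall fun y => measure_lt_top ν _)]
  rfl

end DWAux

open DWAux

theorem wasserstein_conditional_lemma {Ω : Type*} [mΩ : MeasurableSpace Ω]
    [StandardBorelSpace Ω] (μ : Measure Ω) [IsProbabilityMeasure μ]
    (W₁ W₂ Z₁ Z₂ : Ω → ℝ)
    (hW₁m : Measurable W₁) (hW₂m : Measurable W₂)
    (hZ₁m : Measurable Z₁) (hZ₂m : Measurable Z₂)
    (hW₁ : Integrable W₁ μ) (hW₂ : Integrable W₂ μ)
    (hZ₁ : Integrable Z₁ μ) (hZ₂ : Integrable Z₂ μ)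
    (hindep : IndepFun Z₁ Z₂ μ)
    (G : MeasurableSpace Ω) (hG : G ≤ mΩ)
    (hW₁G : Measurable[G] W₁) :
    dW (@Measure.map Ω ℝ mΩ _ (fun ω => W₁ ω + W₂ ω) μ)
        (@Measure.map Ω ℝ mΩ _ (fun ω => Z₁ ω + Z₂ ω) μ) ≤
      dW (@Measure.map Ω ℝ mΩ _ W₁ μ) (@Measure.map Ω ℝ mΩ _ Z₁ μ) +
        ∫ ω, dW (@Measure.map Ω ℝ mΩ _ W₂ (condExpKernel (mΩ := mΩ) μ G ω))
          (@Measure.map Ω ℝ mΩ _ Z₂ μ) ∂μ := by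
  classical
  letI : MeasurableSpace Ω := mΩ
  set ν : Measure ℝ := Measure.map Z₂ μ with hνdef
  set lamW : Measure ℝ := Measure.map W₁ μ with hlamWdef
  set lamZ : Measure ℝ := Measure.map Z₁ μ with hlamZdef
  set P : Measure ℝ := Measure.map (fun ω => W₁ ω + W₂ ω) μ with hPdef
  set Q : Measure ℝ := Measure.map (fun ω => Z₁ ω + Z₂ ω) μ with hQdef
  haveI : IsProbabilityMeasure ν := Measure.isProbabilityMeasure_map hZ₂m.aemeasurable
  haveI : IsProbabilityMeasure lamW := Measure.isProbabilityMeasure_map hW₁m.aemeasurable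
  haveI : IsProbabilityMeasure lamZ := Measure.isProbabilityMeasure_map hZ₁m.aemeasurable
  haveI : IsProbabilityMeasure P := Measure.isProbabilityMeasure_map (hW₁m.add hW₂m).aemeasurable
  haveI : IsProbabilityMeasure Q := Measure.isProbabilityMeasure_map (hZ₁m.add hZ₂m).aemeasurable
  set κ := condExpKernel (mΩ := mΩ) μ G with hκdef
  haveI hηP : ∀ ω, IsProbabilityMeasure (@Measure.map Ω ℝ mΩ _ W₂ (κ ω)) := fun ω =>
    Measure.isProbabilityMeasure_map hW₂m.aemeasurable
  -- joint measurability of the conditional tail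
  have hfstG : @Measurable (Ω × ℝ) Ω _ G Prod.fst := measurable_fst.mono le_rfl hG
  have Fmeas : Measurable fun p : Ω × ℝ => κ p.1 {y | p.2 < W₂ y} := by
    have ht : MeasurableSet {q : (Ω × ℝ) × Ω | q.1.2 < W₂ q.2} :=
      measurableSet_lt (measurable_fst.snd) (hW₂m.comp measurable_snd)
    have h := Kernel.measurable_kernel_prodMk_left
      (κ := κ.comap (Prod.fst : Ω × ℝ → Ω) hfstG) ht
    simpa [Kernel.comap_apply, Set.preimage_setOf_eq] using h
  have Gmeas : Measurable fun p : Ω × ℝ => κ p.1 {y | p.2 - W₁ p.1 < W₂ y} := by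
    have hc : Measurable fun p : Ω × ℝ => (p.1, p.2 - W₁ p.1) :=
      measurable_fst.prodMk (measurable_snd.sub (hW₁m.comp measurable_fst))
    exact Fmeas.comp hc
  have hset_eq : ∀ (ω : Ω) (s : ℝ),
      κ ω {y | s < W₂ y} = (@Measure.map Ω ℝ mΩ _ W₂ (κ ω)) (Set.Ioi s) := by
    intro ω s; rw [Measure.map_apply hW₂m measurableSet_Ioi]; rfl
  set E : Ω → ℝ≥0∞ := fun ω => eW (@Measure.map Ω ℝ mΩ _ W₂ (κ ω)) ν with hEdef
  have hEmeas : Measurable E := by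
    have hjm : Measurable fun p : Ω × ℝ =>
        ENNReal.ofReal |(κ p.1 {y | p.2 < W₂ y}).toReal - tailR ν p.2| :=
      ((Fmeas.ennreal_toReal.sub ((measurable_tailR ν).comp measurable_snd)).abs).ennreal_ofReal
    have h := Measurable.lintegral_prod_right' (ν := (volume : Measure ℝ)) hjm
    have heq : E = fun ω => ∫⁻ s : ℝ,
        ENNReal.ofReal |(κ ω {y | s < W₂ y}).toReal - tailR ν s| := by
      funext ω
      simp only [hEdef, eW]
      congr 1
      funext s
      simp only [tailR, hset_eq]
    rw [heq]; exact h
  -- a.e. constancy of W₁ under the conditional kernel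
  have hconst : ∀ᵐ ω ∂μ, (κ ω) {y | W₁ y ≠ W₁ ω} = 0 := by
    have h1 : ∀ q : ℚ, ∀ᵐ ω ∂μ,
        ((κ ω) (W₁ ⁻¹' Set.Iio (q:ℝ))).toReal
          = (W₁ ⁻¹' Set.Iio (q:ℝ)).indicator (fun _ => (1:ℝ)) ω := by
      intro q
      have hsG : MeasurableSet[G] (W₁ ⁻¹' Set.Iio (q:ℝ)) := hW₁G measurableSet_Iio
      have hs : MeasurableSet (W₁ ⁻¹' Set.Iio (q:ℝ)) := hG _ hsG
      have h := condExpKernel_ae_eq_condExp (μ := μ) hG hs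
      rwa [condExp_of_stronglyMeasurable hG
        ((stronglyMeasurable_const : StronglyMeasurable[G] fun _ : Ω => (1:ℝ)).indicator hsG)
        ((integrable_const (1:ℝ)).indicator hs)] at h
    have h2 : ∀ᵐ ω ∂μ, ∀ q : ℚ, ((κ ω) (W₁ ⁻¹' Set.Iio (q:ℝ))).toReal
        = (W₁ ⁻¹' Set.Iio (q:ℝ)).indicator (fun _ => (1:ℝ)) ω := ae_all_iff.mpr h1
    filter_upwards [h2] with ω hω
    have hval1 : ∀ q : ℚ, W₁ ω < (q:ℝ) → (κ ω) (W₁ ⁻¹' Set.Iio (q:ℝ)) = 1 := by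
      intro q hlt
      have h := hω q
      rw [Set.indicator_of_mem (by exact hlt : ω ∈ W₁ ⁻¹' Set.Iio (q:ℝ))] at h
      have hne : (κ ω) (W₁ ⁻¹' Set.Iio (q:ℝ)) ≠ ⊤ := measure_ne_top _ _
      rw [← ENNReal.ofReal_toReal hne, h]; simp
    have hval0 : ∀ q : ℚ, ¬ W₁ ω < (q:ℝ) → (κ ω) (W₁ ⁻¹' Set.Iio (q:ℝ)) = 0 := by
      intro q hlt
      have h := hω q
      rw [Set.indicator_of_notMem (by exact hlt : ω ∉ W₁ ⁻¹' Set.Iio (q:ℝ))] at h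
      have hne : (κ ω) (W₁ ⁻¹' Set.Iio (q:ℝ)) ≠ ⊤ := measure_ne_top _ _
      rw [← ENNReal.ofReal_toReal hne, h]; simp
    have hsplit : {y | W₁ y ≠ W₁ ω} ⊆ {y | W₁ ω < W₁ y} ∪ {y | W₁ y < W₁ ω} := by
      intro y hy
      rcases lt_or_gt_of_ne hy with h | h
      · exact Or.inr h
      · exact Or.inl h
    refine measure_mono_null hsplit (measure_union_null ?_ ?_)
    · have hsub : {y | W₁ ω < W₁ y} ⊆
          ⋃ q : ℚ, if W₁ ω < (q:ℝ) then (W₁ ⁻¹' Set.Iio (q:ℝ))ᶜ else ∅ := by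
        intro y hy
        obtain ⟨q, hq1, hq2⟩ := exists_rat_btwn (show W₁ ω < W₁ y from hy)
        refine Set.mem_iUnion.mpr ⟨q, ?_⟩
        rw [if_pos hq1]
        simp only [Set.mem_compl_iff, Set.mem_preimage, Set.mem_Iio, not_lt]
        exact le_of_lt hq2
      refine measure_mono_null hsub (measure_iUnion_null fun q => ?_)
      by_cases hq : W₁ ω < (q:ℝ)
      · rw [if_pos hq, measure_compl (hG _ (hW₁G measurableSet_Iio)) (measure_ne_top _ _),
          hval1 q hq, measure_univ, tsub_self]
      · rw [if_neg hq]; exact measure_empty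
    · have hsub : {y | W₁ y < W₁ ω} ⊆
          ⋃ q : ℚ, if ¬ W₁ ω < (q:ℝ) then W₁ ⁻¹' Set.Iio (q:ℝ) else ∅ := by
        intro y hy
        obtain ⟨q, hq1, hq2⟩ := exists_rat_btwn (show W₁ y < W₁ ω from hy)
        refine Set.mem_iUnion.mpr ⟨q, ?_⟩
        rw [if_pos (not_lt.mpr (le_of_lt hq2))]
        exact hq1
      refine measure_mono_null hsub (measure_iUnion_null fun q => ?_)
      by_cases hq : W₁ ω < (q:ℝ)
      · rw [if_neg (not_not.mpr hq)]; exact measure_empty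
      · rw [if_pos hq]; exact hval0 q hq
  have hκset : ∀ t : ℝ, ∀ᵐ ω ∂μ,
      κ ω {y | t < W₁ y + W₂ y} = κ ω {y | t - W₁ ω < W₂ y} := by
    intro t
    filter_upwards [hconst] with ω hω
    have hae : ∀ᵐ y ∂(κ ω), W₁ y = W₁ ω := by
      rw [ae_iff]; exact hω
    apply measure_congr
    rw [Filter.eventuallyEq_set]
    filter_upwards [hae] with y hy
    simp only [Set.mem_setOf_eq, hy, sub_lt_iff_lt_add']
  -- functions f, g, hyb
  set f : ℝ → ℝ := tailR P with hfdef
  set g : ℝ → ℝ := tailR Q with hgdef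
  set hyb : ℝ → ℝ := fun t => ∫ ω, tailR ν (t - W₁ ω) ∂μ with hhybdef
  have hf_eq : ∀ t : ℝ, f t = ∫ ω, (κ ω {y | t - W₁ ω < W₂ y}).toReal ∂μ := by
    intro t
    have hAt : MeasurableSet {ω | t < W₁ ω + W₂ ω} :=
      measurableSet_lt measurable_const (hW₁m.add hW₂m)
    have h0 : f t = (μ {ω | t < W₁ ω + W₂ ω}).toReal := by
      rw [hfdef, tailR, hPdef, Measure.map_apply (hW₁m.fun_add hW₂m) measurableSet_Ioi]
      rfl
    have e1 : (μ {ω | t < W₁ ω + W₂ ω}).toReal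
        = ∫ ω, ({ω' | t < W₁ ω' + W₂ ω'}).indicator (fun _ => (1:ℝ)) ω ∂μ :=
      (integral_indicator_one hAt).symm
    have e2 : ∫ ω, ({ω' | t < W₁ ω' + W₂ ω'}).indicator (fun _ => (1:ℝ)) ω ∂μ
        = ∫ ω, (μ[({ω' | t < W₁ ω' + W₂ ω'}).indicator (fun _ => (1:ℝ))|G]) ω ∂μ :=
      (integral_condExp hG).symm
    have e3 : ∫ ω, (μ[({ω' | t < W₁ ω' + W₂ ω'}).indicator (fun _ => (1:ℝ))|G]) ω ∂μ
        = ∫ ω, (κ ω {ω' | t < W₁ ω' + W₂ ω'}).toReal ∂μ :=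
      integral_congr_ae (condExpKernel_ae_eq_condExp hG hAt).symm
    have e4 : ∫ ω, (κ ω {ω' | t < W₁ ω' + W₂ ω'}).toReal ∂μ
        = ∫ ω, (κ ω {y | t - W₁ ω < W₂ y}).toReal ∂μ :=
      integral_congr_ae ((hκset t).mono fun ω hω => congrArg ENNReal.toReal hω)
    rw [h0, e1, e2, e3, e4]
  -- integrability of the two conditional-tail integrands
  have intΦ : ∀ t : ℝ, Integrable (fun ω => (κ ω {y | t - W₁ ω < W₂ y}).toReal) μ := by
    intro t
    have hm : Measurable fun ω => (κ ω {y | t - W₁ ω < W₂ y}).toReal :=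
      (Gmeas.comp (measurable_id.prodMk measurable_const)).ennreal_toReal
    refine ⟨hm.aestronglyMeasurable, HasFiniteIntegral.of_bounded (C := 1)
      (Filter.Eventually.of_forall fun ω => ?_)⟩
    rw [Real.norm_eq_abs, abs_of_nonneg ENNReal.toReal_nonneg]
    simpa using ENNReal.toReal_mono ENNReal.one_ne_top (prob_le_one (μ := κ ω))
  have intΨ : ∀ t : ℝ, Integrable (fun ω => tailR ν (t - W₁ ω)) μ := by
    intro t
    refine ⟨((measurable_tailR ν).comp (measurable_const.sub hW₁m)).aestronglyMeasurable,
      HasFiniteIntegral.of_bounded (C := 1) (Filter.Eventually.of_forall fun ω => ?_)⟩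
    rw [Real.norm_eq_abs, abs_of_nonneg (tailR_nonneg _ _)]
    exact tailR_le_one ν _
  have hfh : ∀ t : ℝ, |f t - hyb t| ≤
      ∫ ω, |(κ ω {y | t - W₁ ω < W₂ y}).toReal - tailR ν (t - W₁ ω)| ∂μ := by
    intro t
    rw [hf_eq t, hhybdef]
    rw [← integral_sub (intΦ t) (intΨ t)]
    simpa [Real.norm_eq_abs] using norm_integral_le_integral_norm (μ := μ)
      (fun ω => (κ ω {y | t - W₁ ω < W₂ y}).toReal - tailR ν (t - W₁ ω))
  -- the A chain
  have Dmeas : Measurable fun p : Ω × ℝ =>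
      ENNReal.ofReal |(κ p.1 {y | p.2 - W₁ p.1 < W₂ y}).toReal - tailR ν (p.2 - W₁ p.1)| :=
    ((Gmeas.ennreal_toReal.sub ((measurable_tailR ν).comp
      (measurable_snd.sub (hW₁m.comp measurable_fst)))).abs).ennreal_ofReal
  have hAchain : ∫⁻ t : ℝ, ENNReal.ofReal |f t - hyb t| ≤ ∫⁻ ω, E ω ∂μ := by
    have step1 : ∫⁻ t : ℝ, ENNReal.ofReal |f t - hyb t|
        ≤ ∫⁻ t : ℝ, ∫⁻ ω, ENNReal.ofReal
            |(κ ω {y | t - W₁ ω < W₂ y}).toReal - tailR ν (t - W₁ ω)| ∂μ := by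
      refine lintegral_mono fun t => ?_
      refine le_trans (ENNReal.ofReal_le_ofReal (hfh t)) (le_of_eq ?_)
      exact ofReal_integral_eq_lintegral_ofReal ((intΦ t).sub (intΨ t)).abs
        (Filter.Eventually.of_forall fun ω => abs_nonneg _)
    have hswap : ∫⁻ t : ℝ, ∫⁻ ω, ENNReal.ofReal
          |(κ ω {y | t - W₁ ω < W₂ y}).toReal - tailR ν (t - W₁ ω)| ∂μ
        = ∫⁻ ω, (∫⁻ t : ℝ, ENNReal.ofReal
          |(κ ω {y | t - W₁ ω < W₂ y}).toReal - tailR ν (t - W₁ ω)|) ∂μ :=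
      lintegral_lintegral_swap (μ := (volume : Measure ℝ)) (ν := μ)
        (f := fun t ω => ENNReal.ofReal
          |(κ ω {y | t - W₁ ω < W₂ y}).toReal - tailR ν (t - W₁ ω)|)
        ((Dmeas.comp measurable_swap).aemeasurable)
    have hinner : ∀ ω : Ω, (∫⁻ t : ℝ, ENNReal.ofReal
        |(κ ω {y | t - W₁ ω < W₂ y}).toReal - tailR ν (t - W₁ ω)|) = E ω := by
      intro ω
      have hrw : ∀ t : ℝ, (κ ω {y | t - W₁ ω < W₂ y}).toReal
          = tailR (@Measure.map Ω ℝ mΩ _ W₂ (κ ω)) (t - W₁ ω) := by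
        intro t; simp only [tailR, hset_eq]
      simp_rw [hrw]
      exact lintegral_sub_right_eq_self
        (fun s => ENNReal.ofReal |tailR (@Measure.map Ω ℝ mΩ _ W₂ (κ ω)) s - tailR ν s|) (W₁ ω)
    exact step1.trans (le_of_eq (hswap.trans (lintegral_congr hinner)))
  -- finiteness of A
  have hg₀ : Integrable (fun ω => ∫ y, ‖W₂ y‖ ∂κ ω) μ :=
    MeasureTheory.Integrable.integral_norm_condExpKernel (m := G) hW₂
  have hMν_lt : ∫⁻ x : ℝ, ENNReal.ofReal |x| ∂ν < ⊤ := moment_map_lt_top hZ₂m hZ₂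
  have hEbound : ∀ᵐ ω ∂μ, E ω ≤ ENNReal.ofReal (∫ y, ‖W₂ y‖ ∂κ ω)
      + ∫⁻ x : ℝ, ENNReal.ofReal |x| ∂ν := by
    filter_upwards [MeasureTheory.Integrable.condExpKernel_ae (m := G) hW₂] with ω hint
    haveI := hηP ω
    refine (eW_le (@Measure.map Ω ℝ mΩ _ W₂ (κ ω)) ν).trans (add_le_add ?_ le_rfl)
    rw [lintegral_map (f := fun x : ℝ => ENNReal.ofReal |x|)
      (continuous_abs.measurable.ennreal_ofReal) hW₂m,
      ← ofReal_integral_eq_lintegral_ofReal hint.abs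
        (Filter.Eventually.of_forall fun y => abs_nonneg _)]
    exact ENNReal.ofReal_le_ofReal (le_of_eq (integral_congr_ae
      (Filter.Eventually.of_forall fun y => (Real.norm_eq_abs _).symm)))
  have hA_lt : ∫⁻ ω, E ω ∂μ < ⊤ := by
    refine lt_of_le_of_lt (lintegral_mono_ae hEbound) ?_
    rw [lintegral_add_right _ measurable_const]
    refine ENNReal.add_lt_top.mpr ⟨?_, ?_⟩
    · exact lintegral_ofReal_lt_top_of_integrable hg₀
    · rw [lintegral_const, measure_univ, mul_one]; exact hMν_lt
  have hRHS2 : ∫ ω, dW (@Measure.map Ω ℝ mΩ _ W₂ (κ ω)) ν ∂μ = (∫⁻ ω, E ω ∂μ).toReal := by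
    have hdw : ∀ ω, dW (@Measure.map Ω ℝ mΩ _ W₂ (κ ω)) ν = (E ω).toReal := fun ω => by
      haveI := hηP ω; exact dW_eq_toReal_eW _ _
    simp_rw [hdw]
    refine integral_toReal hEmeas.aemeasurable ?_
    filter_upwards [hEbound] with ω hω
    exact lt_of_le_of_lt hω (ENNReal.add_lt_top.mpr ⟨ENNReal.ofReal_lt_top, hMν_lt⟩)
  -- the B chain
  have hprodZ : Q = Measure.map (fun p : ℝ × ℝ => p.1 + p.2) (lamZ.prod ν) := by
    rw [hQdef, hlamZdef, hνdef,
      ← (indepFun_iff_map_prod_eq_prod_map_map hZ₁m.aemeasurable hZ₂m.aemeasurable).mp hindep,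
      Measure.map_map (measurable_fst.fun_add measurable_snd) (hZ₁m.prodMk hZ₂m)]
    rfl
  have hg_eq : ∀ t : ℝ, g t = ∫ y, tailR lamZ (t - y) ∂ν := by
    intro t
    rw [hgdef, tailR, hprodZ,
      Measure.map_apply (measurable_fst.fun_add measurable_snd) measurableSet_Ioi]
    exact toReal_lintegral_tail lamZ ν t
  have hyb_eq : ∀ t : ℝ, hyb t = ∫ y, tailR lamW (t - y) ∂ν := by
    intro t
    have h1 : hyb t = ∫ x, tailR ν (t - x) ∂lamW := by
      rw [hhybdef, hlamWdef]
      exact (integral_map hW₁m.aemeasurable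
        (((measurable_tailR ν).comp (measurable_const.sub measurable_id)).aestronglyMeasurable)).symm
    rw [h1, ← toReal_prod_left lamW ν t, toReal_lintegral_tail lamW ν t]
  have intTail : ∀ (ρ : Measure ℝ), IsProbabilityMeasure ρ → ∀ t : ℝ,
      Integrable (fun y => tailR ρ (t - y)) ν := by
    intro ρ hρ t
    refine ⟨((measurable_tailR ρ).comp (measurable_const.sub measurable_id)).aestronglyMeasurable,
      HasFiniteIntegral.of_bounded (C := 1) (Filter.Eventually.of_forall fun y => ?_)⟩
    rw [Real.norm_eq_abs, abs_of_nonneg (tailR_nonneg _ _)]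
    exact tailR_le_one ρ _
  have hhg : ∀ t : ℝ, |hyb t - g t| ≤ ∫ y, |tailR lamW (t - y) - tailR lamZ (t - y)| ∂ν := by
    intro t
    rw [hyb_eq t, hg_eq t, ← integral_sub (intTail lamW inferInstance t) (intTail lamZ inferInstance t)]
    simpa [Real.norm_eq_abs] using norm_integral_le_integral_norm (μ := ν)
      (fun y => tailR lamW (t - y) - tailR lamZ (t - y))
  have hBchain : ∫⁻ t : ℝ, ENNReal.ofReal |hyb t - g t| ≤ eW lamW lamZ := by
    have step1 : ∫⁻ t : ℝ, ENNReal.ofReal |hyb t - g t|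
        ≤ ∫⁻ t : ℝ, ∫⁻ y, ENNReal.ofReal |tailR lamW (t - y) - tailR lamZ (t - y)| ∂ν := by
      refine lintegral_mono fun t => ?_
      refine le_trans (ENNReal.ofReal_le_ofReal (hhg t)) (le_of_eq ?_)
      exact ofReal_integral_eq_lintegral_ofReal
        ((intTail lamW inferInstance t).sub (intTail lamZ inferInstance t)).abs
        (Filter.Eventually.of_forall fun y => abs_nonneg _)
    have hDm : Measurable fun p : ℝ × ℝ =>
        ENNReal.ofReal |tailR lamW (p.1 - p.2) - tailR lamZ (p.1 - p.2)| := by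
      have msub : Measurable fun p : ℝ × ℝ => p.1 - p.2 := measurable_fst.sub measurable_snd
      exact ((((measurable_tailR lamW).comp msub).sub
        ((measurable_tailR lamZ).comp msub)).abs).ennreal_ofReal
    have hswap : ∫⁻ t : ℝ, ∫⁻ y, ENNReal.ofReal |tailR lamW (t - y) - tailR lamZ (t - y)| ∂ν
        = ∫⁻ y, (∫⁻ t : ℝ, ENNReal.ofReal |tailR lamW (t - y) - tailR lamZ (t - y)|) ∂ν :=
      lintegral_lintegral_swap (μ := (volume : Measure ℝ)) (ν := ν)
        (f := fun t y => ENNReal.ofReal |tailR lamW (t - y) - tailR lamZ (t - y)|)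
        hDm.aemeasurable
    have hinner : ∀ y : ℝ, (∫⁻ t : ℝ,
        ENNReal.ofReal |tailR lamW (t - y) - tailR lamZ (t - y)|) = eW lamW lamZ := fun y =>
      lintegral_sub_right_eq_self (fun s => ENNReal.ofReal |tailR lamW s - tailR lamZ s|) y
    refine step1.trans (le_of_eq ?_)
    rw [hswap, lintegral_congr hinner, lintegral_const, measure_univ, mul_one]
  have hB_lt : eW lamW lamZ < ⊤ :=
    lt_of_le_of_lt (eW_le lamW lamZ)
      (ENNReal.add_lt_top.mpr ⟨moment_map_lt_top hW₁m hW₁, moment_map_lt_top hZ₁m hZ₁⟩)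
  have hybanti : Antitone hyb := by
    intro t1 t2 hle
    simp only [hhybdef]
    exact integral_mono (intΨ t2) (intΨ t1) fun ω =>
      antitone_tailR ν (sub_le_sub_right hle _)
  have hfmeas : Measurable f := measurable_tailR P
  have hgmeas : Measurable g := measurable_tailR Q
  have hybmeas : Measurable hyb := hybanti.measurable
  have htri : eW P Q ≤ eW lamW lamZ + ∫⁻ ω, E ω ∂μ := by
    have h0 : eW P Q = ∫⁻ t : ℝ, ENNReal.ofReal |f t - g t| := by
      simp only [eW, hfdef, hgdef]
    rw [h0]
    calc ∫⁻ t : ℝ, ENNReal.ofReal |f t - g t|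
        ≤ ∫⁻ t : ℝ, (ENNReal.ofReal |f t - hyb t| + ENNReal.ofReal |hyb t - g t|) :=
          lintegral_mono fun t =>
            le_trans (ENNReal.ofReal_le_ofReal (abs_sub_le _ _ _)) ENNReal.ofReal_add_le
      _ = (∫⁻ t : ℝ, ENNReal.ofReal |f t - hyb t|)
          + ∫⁻ t : ℝ, ENNReal.ofReal |hyb t - g t| :=
          lintegral_add_left ((hfmeas.sub hybmeas).abs.ennreal_ofReal) _
      _ ≤ (∫⁻ ω, E ω ∂μ) + eW lamW lamZ := add_le_add hAchain hBchain
      _ = _ := add_comm _ _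
  have hLHS : dW P Q = (eW P Q).toReal := dW_eq_toReal_eW P Q
  have hRHS1 : dW lamW lamZ = (eW lamW lamZ).toReal := dW_eq_toReal_eW lamW lamZ
  rw [hLHS, hRHS1, hRHS2]
  have hsum_ne : eW lamW lamZ + ∫⁻ ω, E ω ∂μ ≠ ⊤ :=
    (ENNReal.add_lt_top.mpr ⟨hB_lt, hA_lt⟩).ne
  calc (eW P Q).toReal ≤ (eW lamW lamZ + ∫⁻ ω, E ω ∂μ).toReal := ENNReal.toReal_mono hsum_ne htri
    _ = (eW lamW lamZ).toReal + (∫⁻ ω, E ω ∂μ).toReal := ENNReal.toReal_add hB_lt.ne hA_lt.ne
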